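/- If there is a temporal beer path from x to y within time interval [t_α, t_ω], then there exists a fastest temporal beer path from x to y within [t_α, t_ω] traversing some active beer vertex b at a time t ∈ T_b, such that both the subpath from x to b and the subpath from b to y are non-dominated temporal paths. -/

import Mathlib

open scoped Classical

structure TEdge (V : Type) where
  src : V
  dst : V
  t : ℝ
  len : ℝ

variable {V : Type}

/-- Consecutive compatibility of temporal edges. -/
def compat (e f : TEdge V) : Prop := e.dst = f.src ∧ e.t + e.len ≤ f.t

/-- A temporal path from `x` to `y`: a nonempty list of temporal edges of `E`,
starting at `x`, ending at `y`, consecutively compatible. -/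
def IsPath (E : Set (TEdge V)) (x y : V) (p : List (TEdge V)) : Prop :=
  p ≠ [] ∧ (∀ e ∈ p, e ∈ E) ∧ p.head?.map TEdge.src = some x ∧
    p.getLast?.map TEdge.dst = some y ∧ List.Chain' compat p

/-- Starting time of a temporal path. -/
def startT (p : List (TEdge V)) : ℝ := ((p.head?).map TEdge.t).getD 0

/-- Ending (arrival) time of a temporal path. -/
def endT (p : List (TEdge V)) : ℝ := ((p.getLast?).map (fun e => e.t + e.len)).getD 0

/-- Distance (sum of traversal times) of a temporal path. -/
def distT (p : List (TEdge V)) : ℝ := (p.map TEdge.len).sum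

/-- `p = q ++ r` witnesses a visit of beer vertex `b` at time `t`:
`b` is the endpoint of `q` (or the source `x` if `q` is empty), `t` is no
earlier than the arrival of the last edge of `q` and no later than the
departure of the first edge of `r`. -/
def BeerSplit (x b : V) (t : ℝ) (p q r : List (TEdge V)) : Prop :=
  p = q ++ r ∧ ((q.getLast?).map TEdge.dst).getD x = b ∧
    (∀ e ∈ q.getLast?, e.t + e.len ≤ t) ∧ (∀ e ∈ r.head?, t ≤ e.t)

/-- A temporal beer path from `x` to `y`: a temporal path visiting some active
beer vertex `b ∈ B` at some time `t ∈ T b` between the arrival at `b` and the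
departure from `b`. -/
def IsBeerPath (E : Set (TEdge V)) (B : Set V) (T : V → Set ℝ) (x y : V)
    (p : List (TEdge V)) : Prop :=
  IsPath E x y p ∧ ∃ b ∈ B, ∃ t ∈ T b, ∃ q r, BeerSplit x b t p q r

/-- The path `p` starts no earlier than `tα` and ends no later than `tω`. -/
def InWin (tα tω : ℝ) (p : List (TEdge V)) : Prop :=
  tα ≤ startT p ∧ endT p ≤ tω

/-- `p` is a non-dominated temporal `x`-`y` path: no temporal `x`-`y` path
starts no earlier and ends no later, with one inequality strict. -/
def NonDom (E : Set (TEdge V)) (x y : V) (p : List (TEdge V)) : Prop :=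
  IsPath E x y p ∧
  ¬ ∃ p', IsPath E x y p' ∧ startT p ≤ startT p' ∧ endT p' ≤ endT p ∧
      (startT p < startT p' ∨ endT p' < endT p)


lemma exists_argmax {α : Type*} {S : Set α} (hS : S.Nonempty) (f : α → ℝ)
    (hf : (f '' S).Finite) : ∃ p ∈ S, ∀ q ∈ S, f q ≤ f p := by
  obtain ⟨M, hM, hmax⟩ := Set.exists_max_image (f '' S) id hf (hS.image f)
  obtain ⟨p, hp, rfl⟩ := hM
  exact ⟨p, hp, fun q hq => hmax (f q) ⟨q, hq, rfl⟩⟩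

lemma startT_cons (e : TEdge V) (l : List (TEdge V)) : startT (e :: l) = e.t := by
  simp [startT]

lemma endT_ne_nil {p : List (TEdge V)} (h : p ≠ []) :
    endT p = (p.getLast h).t + (p.getLast h).len := by
  simp [endT, List.getLast?_eq_getLast h]

lemma getLast?_append_right (q : List (TEdge V)) {r : List (TEdge V)} (hr : r ≠ []) :
    (q ++ r).getLast? = r.getLast? := by
  rw [List.getLast?_append, List.getLast?_eq_getLast hr]; rfl

lemma startT_append_left {q : List (TEdge V)} (r : List (TEdge V)) (hq : q ≠ []) :
    startT (q ++ r) = startT q := by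
  obtain ⟨e, l, rfl⟩ := List.exists_cons_of_ne_nil hq
  simp [startT]

lemma endT_append_right (q : List (TEdge V)) {r : List (TEdge V)} (hr : r ≠ []) :
    endT (q ++ r) = endT r := by
  rw [endT, getLast?_append_right q hr, endT]

lemma fin_obj {E : Set (TEdge V)} (hE : E.Finite) (S : Set (List (TEdge V)))
    (hS : ∀ p ∈ S, p ≠ [] ∧ ∀ e ∈ p, e ∈ E) :
    ((fun p => startT p - endT p) '' S).Finite := by
  apply Set.Finite.subset (Set.Finite.image2 (fun a b => a - b)
    (hE.image TEdge.t) (hE.image (fun e => e.t + e.len)))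
  rintro _ ⟨p, hp, rfl⟩
  obtain ⟨hne, hmem⟩ := hS p hp
  obtain ⟨e, l, rfl⟩ := List.exists_cons_of_ne_nil hne
  exact Set.mem_image2_of_mem ⟨e, hmem e (List.mem_cons_self), (startT_cons e l).symm⟩
    ⟨(e :: l).getLast (by simp), hmem _ (List.getLast_mem _), (endT_ne_nil (by simp)).symm⟩

lemma isPath_left {E : Set (TEdge V)} {x y b : V} {q r : List (TEdge V)}
    (h : IsPath E x y (q ++ r)) (hq : q ≠ [])
    (hb : ((q.getLast?).map TEdge.dst).getD x = b) : IsPath E x b q := by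
  obtain ⟨-, hmem, hhead, -, hchain⟩ := h
  refine ⟨hq, fun e he => hmem e (List.mem_append_left _ he), ?_, ?_, (List.isChain_append.mp hchain).1⟩
  · obtain ⟨e, l, rfl⟩ := List.exists_cons_of_ne_nil hq
    simpa using hhead
  · rw [List.getLast?_eq_getLast hq] at hb ⊢
    simpa using hb

lemma isPath_right {E : Set (TEdge V)} {x y b : V} {q r : List (TEdge V)}
    (h : IsPath E x y (q ++ r)) (hr : r ≠ [])
    (hb : ((q.getLast?).map TEdge.dst).getD x = b) : IsPath E b y r := by
  obtain ⟨-, hmem, hhead, hlast, hchain⟩ := h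
  refine ⟨hr, fun e he => hmem e (List.mem_append_right _ he), ?_, ?_, (List.isChain_append.mp hchain).2.1⟩
  · obtain ⟨f, l, rfl⟩ := List.exists_cons_of_ne_nil hr
    rcases eq_or_ne q [] with rfl | hq
    · simp at hb; simpa [← hb] using hhead
    · have hjunc := (List.isChain_append.mp hchain).2.2 (q.getLast hq)
        (by rw [List.getLast?_eq_getLast hq]; rfl) f (by simp)
      rw [List.getLast?_eq_getLast hq] at hb
      simp only [Option.map_some, Option.getD_some] at hb
      simp [← hb, hjunc.1]
  · rw [getLast?_append_right q hr] at hlast; exact hlast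

lemma isPath_append {E : Set (TEdge V)} {x y b : V} {q r : List (TEdge V)}
    (hq : IsPath E x b q) (hr : IsPath E b y r) (hle : endT q ≤ startT r) :
    IsPath E x y (q ++ r) := by
  obtain ⟨hqne, hqmem, hqhead, hqlast, hqchain⟩ := hq
  obtain ⟨hrne, hrmem, hrhead, hrlast, hrchain⟩ := hr
  refine ⟨by simp [hqne], ?_, ?_, ?_, ?_⟩
  · intro e he; rcases List.mem_append.mp he with h | h
    exacts [hqmem e h, hrmem e h]
  · obtain ⟨e, l, rfl⟩ := List.exists_cons_of_ne_nil hqne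
    simpa using hqhead
  · rw [getLast?_append_right q hrne]; exact hrlast
  · refine List.isChain_append.mpr ⟨hqchain, hrchain, ?_⟩
    intro a ha c hc
    rw [List.getLast?_eq_getLast hqne, Option.mem_def, Option.some_inj] at ha
    obtain ⟨f, l, rfl⟩ := List.exists_cons_of_ne_nil hrne
    rw [List.head?_cons, Option.mem_def, Option.some_inj] at hc
    constructor
    · rw [List.getLast?_eq_getLast hqne] at hqlast
      simp only [Option.map_some, Option.some_inj] at hqlast
      rw [List.head?_cons] at hrhead
      simp only [Option.map_some, Option.some_inj] at hrhead
      rw [ha, ← hc] at *; rw [hqlast, ← hrhead]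
    · have h1 : a.t + a.len = endT q := by rw [endT_ne_nil hqne, ha]
      have h2 : startT (f :: l) = c.t := by rw [← hc]; exact startT_cons f l
      rw [h1, ← h2]; exact hle

lemma nonDom_of_max {E : Set (TEdge V)} {u v : V} {s en : ℝ} {q' : List (TEdge V)}
    (h1 : IsPath E u v q') (h2 : s ≤ startT q') (h3 : endT q' ≤ en)
    (hmax : ∀ q'', IsPath E u v q'' → s ≤ startT q'' → endT q'' ≤ en →
      startT q'' - endT q'' ≤ startT q' - endT q') :
    NonDom E u v q' := by
  refine ⟨h1, ?_⟩
  rintro ⟨p', hp', ha, hb, hc⟩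
  have := hmax p' hp' (le_trans h2 ha) (le_trans hb h3)
  rcases hc with h | h <;> linarith

/-- If there is a temporal beer path from `x` to `y` within `[tα, tω]`, then
there is a fastest temporal beer path within `[tα, tω]` through some active
beer vertex `b` at a time `t ∈ T b`, whose `x`-`b` and `b`-`y` subpaths are
non-dominated temporal paths. -/
theorem stmt3 (E : Set (TEdge V)) (hE : E.Finite) (B : Set V) (T : V → Set ℝ)
    (x y : V) (tα tω : ℝ)
    (hex : ∃ p, IsBeerPath E B T x y p ∧ InWin tα tω p) :
    ∃ p, IsBeerPath E B T x y p ∧ InWin tα tω p ∧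
      (∀ p', IsBeerPath E B T x y p' → InWin tα tω p' →
        endT p - startT p ≤ endT p' - startT p') ∧
      ∃ b ∈ B, ∃ t ∈ T b, ∃ q r, BeerSplit x b t p q r ∧
        (q ≠ [] → NonDom E x b q) ∧ (r ≠ [] → NonDom E b y r) := by
  classical
  set S : Set (List (TEdge V)) := {p | IsBeerPath E B T x y p ∧ InWin tα tω p} with hSdef
  have hSfin : ((fun p => startT p - endT p) '' S).Finite :=
    fin_obj hE S (fun p hp => ⟨hp.1.1.1, hp.1.1.2.1⟩)
  obtain ⟨p, hpS, hpmax⟩ := exists_argmax hex (fun p => startT p - endT p) hSfin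
  obtain ⟨⟨hpPath, b, hbB, t, htT, q, r, hsplit, hqb, hqt, hrt⟩, hwin⟩ := hpS
  subst hsplit
  rcases eq_or_ne q [] with rfl | hqne
  · -- q empty, so b = x and p = r
    simp only [List.getLast?_nil, Option.map_none, Option.getD_none] at hqb
    subst hqb
    simp only [List.nil_append] at hpPath hpmax hwin ⊢
    have hrne : r ≠ [] := hpPath.1
    have htr : t ≤ startT r := by
      obtain ⟨f, l, rfl⟩ := List.exists_cons_of_ne_nil hrne
      rw [startT_cons]; exact hrt f (by simp)
    set Sr : Set (List (TEdge V)) :=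
      {r' | IsPath E x y r' ∧ startT r ≤ startT r' ∧ endT r' ≤ endT r} with hSr
    have hSrfin : ((fun p => startT p - endT p) '' Sr).Finite :=
      fin_obj hE Sr (fun p hp => ⟨hp.1.1, hp.1.2.1⟩)
    have hrSr : r ∈ Sr := ⟨hpPath, le_refl _, le_refl _⟩
    obtain ⟨r', ⟨hr'path, hr's, hr'e⟩, hr'max⟩ :=
      exists_argmax ⟨r, hrSr⟩ (fun p => startT p - endT p) hSrfin
    have hsplit' : BeerSplit x x t r' [] r' :=
      ⟨by simp, by simp, by simp,
        fun e he => by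
          obtain ⟨f, l, rfl⟩ := List.exists_cons_of_ne_nil hr'path.1
          simp only [List.head?_cons, Option.mem_def, Option.some_inj] at he
          have := le_trans htr hr's
          rw [startT_cons] at this; rw [← he]; exact this⟩
    have hr'beer : IsBeerPath E B T x y r' := ⟨hr'path, x, hbB, t, htT, [], r', hsplit'⟩
    have hr'win : InWin tα tω r' := ⟨le_trans hwin.1 hr's, le_trans hr'e hwin.2⟩
    refine ⟨r', hr'beer, hr'win, ?_, x, hbB, t, htT, [], r', hsplit', ?_, ?_⟩
    · intro p' hp' hw'
      have h1 := hpmax p' ⟨hp', hw'⟩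
      linarith
    · intro h; exact absurd rfl h
    · intro _
      exact nonDom_of_max hr'path hr's hr'e (fun w hw h2 h3 => hr'max w ⟨hw, h2, h3⟩)
  · rcases eq_or_ne r [] with rfl | hrne
    · -- r empty, so b = y and p = q
      simp only [List.append_nil] at hpPath hpmax hwin ⊢
      have hby : b = y := by
        rw [List.getLast?_eq_getLast hqne] at hqb
        have := hpPath.2.2.2.1
        rw [List.getLast?_eq_getLast hqne] at this
        simp only [Option.map_some, Option.getD_some] at hqb
        simp only [Option.map_some, Option.some_inj] at this
        rw [← hqb, this]
      subst hby
      have hqt' : endT q ≤ t := by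
        rw [endT_ne_nil hqne]
        exact hqt _ (by rw [List.getLast?_eq_getLast hqne]; rfl)
      set Sq : Set (List (TEdge V)) :=
        {q' | IsPath E x b q' ∧ startT q ≤ startT q' ∧ endT q' ≤ endT q} with hSq
      have hSqfin : ((fun p => startT p - endT p) '' Sq).Finite :=
        fin_obj hE Sq (fun p hp => ⟨hp.1.1, hp.1.2.1⟩)
      obtain ⟨q', ⟨hq'path, hq's, hq'e⟩, hq'max⟩ :=
        exists_argmax ⟨q, show q ∈ Sq from ⟨hpPath, le_refl _, le_refl _⟩⟩ (fun p => startT p - endT p) hSqfin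
      have hq'b : ((q'.getLast?).map TEdge.dst).getD x = b := by
        rw [List.getLast?_eq_getLast hq'path.1]
        have := hq'path.2.2.2.1
        rw [List.getLast?_eq_getLast hq'path.1] at this
        simpa using this
      have hsplit' : BeerSplit x b t q' q' [] :=
        ⟨by simp, hq'b, fun e he => by
          rw [List.getLast?_eq_getLast hq'path.1, Option.mem_def, Option.some_inj] at he
          have : endT q' = e.t + e.len := by rw [endT_ne_nil hq'path.1, he]
          linarith [le_trans hq'e hqt'], by simp⟩
      have hq'beer : IsBeerPath E B T x b q' := ⟨hq'path, b, hbB, t, htT, q', [], hsplit'⟩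
      refine ⟨q', hq'beer, ⟨le_trans hwin.1 hq's, le_trans hq'e hwin.2⟩, ?_,
        b, hbB, t, htT, q', [], hsplit', ?_, ?_⟩
      · intro p' hp' hw'
        have h1 := hpmax p' ⟨hp', hw'⟩
        linarith
      · intro _
        exact nonDom_of_max hq'path hq's hq'e (fun w hw h2 h3 => hq'max w ⟨hw, h2, h3⟩)
      · intro h; exact absurd rfl h
    · -- both nonempty
      have hqpath : IsPath E x b q := isPath_left hpPath hqne hqb
      have hrpath : IsPath E b y r := isPath_right hpPath hrne hqb
      have hqt' : endT q ≤ t := by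
        rw [endT_ne_nil hqne]
        exact hqt _ (by rw [List.getLast?_eq_getLast hqne]; rfl)
      have htr : t ≤ startT r := by
        obtain ⟨f, l, rfl⟩ := List.exists_cons_of_ne_nil hrne
        rw [startT_cons]; exact hrt f (by simp)
      set Sq : Set (List (TEdge V)) :=
        {q' | IsPath E x b q' ∧ startT q ≤ startT q' ∧ endT q' ≤ endT q} with hSq
      have hSqfin : ((fun p => startT p - endT p) '' Sq).Finite :=
        fin_obj hE Sq (fun p hp => ⟨hp.1.1, hp.1.2.1⟩)
      obtain ⟨q', ⟨hq'path, hq's, hq'e⟩, hq'max⟩ :=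
        exists_argmax ⟨q, show q ∈ Sq from ⟨hqpath, le_refl _, le_refl _⟩⟩ (fun p => startT p - endT p) hSqfin
      set Sr : Set (List (TEdge V)) :=
        {r' | IsPath E b y r' ∧ startT r ≤ startT r' ∧ endT r' ≤ endT r} with hSr
      have hSrfin : ((fun p => startT p - endT p) '' Sr).Finite :=
        fin_obj hE Sr (fun p hp => ⟨hp.1.1, hp.1.2.1⟩)
      obtain ⟨r', ⟨hr'path, hr's, hr'e⟩, hr'max⟩ :=
        exists_argmax ⟨r, show r ∈ Sr from ⟨hrpath, le_refl _, le_refl _⟩⟩ (fun p => startT p - endT p) hSrfin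
      have hle : endT q' ≤ startT r' := by linarith
      have hppath : IsPath E x y (q' ++ r') := isPath_append hq'path hr'path hle
      have hq'b : ((q'.getLast?).map TEdge.dst).getD x = b := by
        rw [List.getLast?_eq_getLast hq'path.1]
        have := hq'path.2.2.2.1
        rw [List.getLast?_eq_getLast hq'path.1] at this
        simpa using this
      have hsplit' : BeerSplit x b t (q' ++ r') q' r' :=
        ⟨rfl, hq'b,
          fun e he => by
            rw [List.getLast?_eq_getLast hq'path.1, Option.mem_def, Option.some_inj] at he
            have : endT q' = e.t + e.len := by rw [endT_ne_nil hq'path.1, he]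
            linarith [le_trans hq'e hqt'],
          fun e he => by
            obtain ⟨f, l, rfl⟩ := List.exists_cons_of_ne_nil hr'path.1
            simp only [List.head?_cons, Option.mem_def, Option.some_inj] at he
            have := le_trans (le_trans htr hr's) (le_of_eq (startT_cons f l).symm)
            rw [startT_cons] at this
            rw [← he]; linarith⟩
      have hbeer : IsBeerPath E B T x y (q' ++ r') := ⟨hppath, b, hbB, t, htT, q', r', hsplit'⟩
      have hsS : startT (q ++ r) ≤ startT (q' ++ r') := by
        rw [startT_append_left r hqne, startT_append_left r' hq'path.1]; exact hq's
      have heS : endT (q' ++ r') ≤ endT (q ++ r) := by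
        rw [endT_append_right q hrne, endT_append_right q' hr'path.1]; exact hr'e
      refine ⟨q' ++ r', hbeer, ⟨le_trans hwin.1 hsS, le_trans heS hwin.2⟩, ?_,
        b, hbB, t, htT, q', r', hsplit', ?_, ?_⟩
      · intro p' hp' hw'
        have h1 := hpmax p' ⟨hp', hw'⟩
        linarith
      · intro _
        exact nonDom_of_max hq'path hq's hq'e (fun w hw h2 h3 => hq'max w ⟨hw, h2, h3⟩)
      · intro _
        exact nonDom_of_max hr'path hr's hr'e (fun w hw h2 h3 => hr'max w ⟨hw, h2, h3⟩)
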